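/- The range of the function g : ℝ → ℝ, g(λ) := d − ∑ᵢ aᵢ · clamp(vᵢ − λaᵢ; lᵢ, uᵢ), is exactly the closed bounded interval [d + ∑_{i: aᵢ<0} lᵢ|aᵢ| − ∑_{i: aᵢ>0} uᵢ|aᵢ| , d + ∑_{i: aᵢ<0} uᵢ|aᵢ| − ∑_{i: aᵢ>0} lᵢ|aᵢ|]. -/

import Mathlib

/-- `clamp(t; l, u) = max(l, min(u, t))`. -/
def clamp (l u t : ℝ) : ℝ := max l (min u t)

/-- `g(λ) = d − ∑ᵢ aᵢ · clamp(vᵢ − λ aᵢ; lᵢ, uᵢ)`, the derivative of the dual function of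
the projection problem onto `K ∩ L`. -/
def gFun {n : ℕ} (l u a v : Fin n → ℝ) (d : ℝ) (lam : ℝ) : ℝ :=
  d - ∑ i, a i * clamp (l i) (u i) (v i - lam * a i)

lemma clamp_le (l u t : ℝ) (h : l ≤ u) : clamp l u t ≤ u :=
  max_le h (min_le_left _ _)

lemma le_clamp (l u t : ℝ) : l ≤ clamp l u t := le_max_left _ _

lemma clamp_of_le (l u t : ℝ) (h : l ≤ u) (ht : t ≤ l) : clamp l u t = l := by
  unfold clamp
  rw [min_eq_right (ht.trans h), max_eq_left ht]

lemma clamp_of_ge (l u t : ℝ) (h : l ≤ u) (ht : u ≤ t) : clamp l u t = u := by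
  unfold clamp
  rw [min_eq_left ht, max_eq_right h]

open Finset in
lemma sum_split {n : ℕ} (a F : Fin n → ℝ) (h0 : ∀ i, a i = 0 → F i = 0) :
    ∑ i, F i = (∑ i ∈ univ.filter fun i => 0 < a i, F i)
      + ∑ i ∈ univ.filter fun i => a i < 0, F i := by
  classical
  rw [← Finset.sum_filter_add_sum_filter_not univ (fun i => 0 < a i) F]
  congr 1
  rw [← Finset.sum_filter_add_sum_filter_not (univ.filter fun i => ¬ 0 < a i)
    (fun i => a i < 0) F]
  have hz : ∑ i ∈ (univ.filter fun i => ¬ 0 < a i).filter (fun i => ¬ a i < 0), F i = 0 := by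
    apply Finset.sum_eq_zero
    intro i hi
    simp only [mem_filter] at hi
    exact h0 i (le_antisymm (not_lt.1 hi.1.2) (not_lt.1 hi.2))
  rw [hz, add_zero, Finset.filter_filter]
  apply Finset.sum_congr _ (fun _ _ => rfl)
  ext i
  simp only [mem_filter, mem_univ, true_and]
  constructor
  · exact fun h => h.2
  · exact fun h => ⟨not_lt.2 h.le, h⟩

/-- The range of `g` is exactly the closed bounded interval
`[d + ∑_{aᵢ<0} lᵢ|aᵢ| − ∑_{aᵢ>0} uᵢ|aᵢ|, d + ∑_{aᵢ<0} uᵢ|aᵢ| − ∑_{aᵢ>0} lᵢ|aᵢ|]`. -/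
theorem gFun_range {n : ℕ} (hn : 1 ≤ n)
    (l u a v : Fin n → ℝ) (hlu : ∀ i, l i < u i) (d : ℝ) :
    Set.range (gFun l u a v d) =
      Set.Icc
        (d + (∑ i ∈ Finset.univ.filter fun i => a i < 0, l i * |a i|) -
          ∑ i ∈ Finset.univ.filter fun i => 0 < a i, u i * |a i|)
        (d + (∑ i ∈ Finset.univ.filter fun i => a i < 0, u i * |a i|) -
          ∑ i ∈ Finset.univ.filter fun i => 0 < a i, l i * |a i|) := by
  classical
  have hcont : Continuous (gFun l u a v d) := by
    unfold gFun clamp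
    fun_prop
  set c : ℝ → Fin n → ℝ := fun lam i => clamp (l i) (u i) (v i - lam * a i) with hc
  have hzero : ∀ (lam : ℝ) i, a i = 0 → a i * c lam i = 0 := by
    intro lam i h; rw [h]; ring
  -- rewriting sums with absolute values
  have habs_pos : ∀ (w : Fin n → ℝ),
      ∑ i ∈ Finset.univ.filter fun i => 0 < a i, a i * w i
        = ∑ i ∈ Finset.univ.filter fun i => 0 < a i, w i * |a i| := by
    intro w
    refine Finset.sum_congr rfl fun i hi => ?_
    simp only [Finset.mem_filter] at hi
    rw [abs_of_pos hi.2]; ring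
  have habs_neg : ∀ (w : Fin n → ℝ),
      ∑ i ∈ Finset.univ.filter fun i => a i < 0, a i * w i
        = -∑ i ∈ Finset.univ.filter fun i => a i < 0, w i * |a i| := by
    intro w
    rw [← Finset.sum_neg_distrib]
    refine Finset.sum_congr rfl fun i hi => ?_
    simp only [Finset.mem_filter] at hi
    rw [abs_of_neg hi.2]; ring
  -- choose a large M that saturates all clamps
  set M : ℝ := 1 + ∑ i, (|v i| + |l i| + |u i|) / |a i| with hMdef
  have hMkey : ∀ i, a i ≠ 0 → |v i| + |l i| + |u i| ≤ M * |a i| := by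
    intro i hi
    have hai : 0 < |a i| := abs_pos.2 hi
    have hterm : (|v i| + |l i| + |u i|) / |a i| ≤ M := by
      have h1 : ∀ j ∈ Finset.univ, (0:ℝ) ≤ (|v j| + |l j| + |u j|) / |a j| :=
        fun j _ => div_nonneg (by positivity) (abs_nonneg _)
      have := Finset.single_le_sum h1 (Finset.mem_univ i)
      simp only [hMdef]; linarith
    calc |v i| + |l i| + |u i| = ((|v i| + |l i| + |u i|) / |a i|) * |a i| := by
          field_simp
      _ ≤ M * |a i| := by
          exact mul_le_mul_of_nonneg_right hterm (abs_nonneg _)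
  -- saturation at M and -M
  have hsatM_pos : ∀ i, 0 < a i → c M i = l i := by
    intro i hi
    apply clamp_of_le _ _ _ (hlu i).le
    have h := hMkey i (ne_of_gt hi)
    rw [abs_of_pos hi] at h
    have h1 := le_abs_self (v i)
    have h2 := neg_abs_le (l i)
    have h3 := abs_nonneg (u i)
    linarith
  have hsatM_neg : ∀ i, a i < 0 → c M i = u i := by
    intro i hi
    apply clamp_of_ge _ _ _ (hlu i).le
    have h := hMkey i (ne_of_lt hi)
    rw [abs_of_neg hi] at h
    have h1 := neg_abs_le (v i)
    have h2 := le_abs_self (u i)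
    have h3 := abs_nonneg (l i)
    nlinarith
  have hsatM'_pos : ∀ i, 0 < a i → c (-M) i = u i := by
    intro i hi
    apply clamp_of_ge _ _ _ (hlu i).le
    have h := hMkey i (ne_of_gt hi)
    rw [abs_of_pos hi] at h
    have h1 := neg_abs_le (v i)
    have h2 := le_abs_self (u i)
    have h3 := abs_nonneg (l i)
    nlinarith
  have hsatM'_neg : ∀ i, a i < 0 → c (-M) i = l i := by
    intro i hi
    apply clamp_of_le _ _ _ (hlu i).le
    have h := hMkey i (ne_of_lt hi)
    rw [abs_of_neg hi] at h
    have h1 := le_abs_self (v i)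
    have h2 := neg_abs_le (l i)
    have h3 := abs_nonneg (u i)
    nlinarith
  -- values at the saturating points
  have hgM : gFun l u a v d M =
      d + (∑ i ∈ Finset.univ.filter fun i => a i < 0, u i * |a i|) -
        ∑ i ∈ Finset.univ.filter fun i => 0 < a i, l i * |a i| := by
    unfold gFun
    rw [sum_split a _ (hzero M)]
    have e1 : ∑ i ∈ Finset.univ.filter fun i => 0 < a i, a i * c M i
        = ∑ i ∈ Finset.univ.filter fun i => 0 < a i, a i * l i := by
      refine Finset.sum_congr rfl fun i hi => ?_
      simp only [Finset.mem_filter] at hi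
      rw [hsatM_pos i hi.2]
    have e2 : ∑ i ∈ Finset.univ.filter fun i => a i < 0, a i * c M i
        = ∑ i ∈ Finset.univ.filter fun i => a i < 0, a i * u i := by
      refine Finset.sum_congr rfl fun i hi => ?_
      simp only [Finset.mem_filter] at hi
      rw [hsatM_neg i hi.2]
    rw [e1, e2, habs_pos, habs_neg]
    ring
  have hgM' : gFun l u a v d (-M) =
      d + (∑ i ∈ Finset.univ.filter fun i => a i < 0, l i * |a i|) -
        ∑ i ∈ Finset.univ.filter fun i => 0 < a i, u i * |a i| := by
    unfold gFun
    rw [sum_split a _ (hzero (-M))]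
    have e1 : ∑ i ∈ Finset.univ.filter fun i => 0 < a i, a i * c (-M) i
        = ∑ i ∈ Finset.univ.filter fun i => 0 < a i, a i * u i := by
      refine Finset.sum_congr rfl fun i hi => ?_
      simp only [Finset.mem_filter] at hi
      rw [hsatM'_pos i hi.2]
    have e2 : ∑ i ∈ Finset.univ.filter fun i => a i < 0, a i * c (-M) i
        = ∑ i ∈ Finset.univ.filter fun i => a i < 0, a i * l i := by
      refine Finset.sum_congr rfl fun i hi => ?_
      simp only [Finset.mem_filter] at hi
      rw [hsatM'_neg i hi.2]
    rw [e1, e2, habs_pos, habs_neg]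
    ring
  apply Set.Subset.antisymm
  · -- range ⊆ Icc : termwise bounds
    rintro y ⟨lam, rfl⟩
    have hcl : ∀ i, l i ≤ c lam i := fun i => le_clamp _ _ _
    have hcu : ∀ i, c lam i ≤ u i := fun i => clamp_le _ _ _ (hlu i).le
    constructor
    · -- lower bound
      unfold gFun
      rw [sum_split a _ (hzero lam)]
      have b1 : ∑ i ∈ Finset.univ.filter fun i => 0 < a i, a i * c lam i
          ≤ ∑ i ∈ Finset.univ.filter fun i => 0 < a i, a i * u i := by
        refine Finset.sum_le_sum fun i hi => ?_
        simp only [Finset.mem_filter] at hi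
        exact mul_le_mul_of_nonneg_left (hcu i) hi.2.le
      have b2 : ∑ i ∈ Finset.univ.filter fun i => a i < 0, a i * c lam i
          ≤ ∑ i ∈ Finset.univ.filter fun i => a i < 0, a i * l i := by
        refine Finset.sum_le_sum fun i hi => ?_
        simp only [Finset.mem_filter] at hi
        exact mul_le_mul_of_nonpos_left (hcl i) hi.2.le
      rw [habs_pos u, habs_neg l] at *
      linarith
    · -- upper bound
      unfold gFun
      rw [sum_split a _ (hzero lam)]
      have b1 : ∑ i ∈ Finset.univ.filter fun i => 0 < a i, a i * l i
          ≤ ∑ i ∈ Finset.univ.filter fun i => 0 < a i, a i * c lam i := by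
        refine Finset.sum_le_sum fun i hi => ?_
        simp only [Finset.mem_filter] at hi
        exact mul_le_mul_of_nonneg_left (hcl i) hi.2.le
      have b2 : ∑ i ∈ Finset.univ.filter fun i => a i < 0, a i * u i
          ≤ ∑ i ∈ Finset.univ.filter fun i => a i < 0, a i * c lam i := by
        refine Finset.sum_le_sum fun i hi => ?_
        simp only [Finset.mem_filter] at hi
        exact mul_le_mul_of_nonpos_left (hcu i) hi.2.le
      rw [habs_pos l, habs_neg u] at *
      linarith
  · -- Icc ⊆ range : intermediate value theorem
    rw [← hgM, ← hgM']
    exact intermediate_value_univ (-M) M hcont
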